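/- For k = 3, the diameter of the level-n Schreier graph Γ_n of the Hanoi Towers group H(3) equals 2^n − 1 for every n ≥ 0. -/

import Mathlib

/-- The generator `a_{(ij)}` of the Hanoi Towers group, acting on finite words:
`a_{(ij)}(iw) = jw`, `a_{(ij)}(jw) = iw`, `a_{(ij)}(xw) = x · a_{(ij)}(w)` for `x ∉ {i,j}`,
and `a_{(ij)}(ε) = ε`. -/
def hMove {k : ℕ} (i j : Fin k) : List (Fin k) → List (Fin k)
  | [] => []
  | x :: w => if x = i then j :: w else if x = j then i :: w else x :: hMove i j w

theorem hMove_involutive {k : ℕ} (i j : Fin k) : ∀ l, hMove i j (hMove i j l) = l := by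
  intro l
  induction l with
  | nil => rfl
  | cons x w ih =>
    by_cases hxi : x = i
    · by_cases hij : j = i <;> simp [hMove, hxi, hij]
    · by_cases hxj : x = j
      · by_cases hij : j = i <;> simp [hMove, hxi, hxj, hij]
      · simp [hMove, hxi, hxj, ih]

/-- The generator `a_{(ij)}` as a permutation of the set of finite words. -/
def hGen {k : ℕ} (i j : Fin k) : Equiv.Perm (List (Fin k)) :=
  ⟨hMove i j, hMove i j, hMove_involutive i j, hMove_involutive i j⟩

/-- The Hanoi Towers group `H(k)`, the subgroup of the permutation group of the set of
finite words over `{0, …, k-1}` generated by the `a_{(ij)}` for `i < j`. -/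
def HanoiGroup (k : ℕ) : Subgroup (Equiv.Perm (List (Fin k))) :=
  Subgroup.closure {g | ∃ i j : Fin k, i < j ∧ g = hGen i j}

theorem hMove_length {k : ℕ} (i j : Fin k) (l : List (Fin k)) :
    (hMove i j l).length = l.length := by
  induction l with
  | nil => rfl
  | cons x w ih =>
    by_cases hxi : x = i
    · by_cases hij : j = i <;> simp [hMove, hxi, hij]
    · by_cases hxj : x = j
      · by_cases hij : j = i <;> simp [hMove, hxi, hxj, hij]
      · simp [hMove, hxi, hxj, ih]

/-- The action of the generator `a_{(ij)}` on words of length `n`, viewed as functions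
`Fin n → Fin k` (via the word `List.ofFn u`; the action preserves length). -/
def levelMove {k n : ℕ} (i j : Fin k) (u : Fin n → Fin k) : Fin n → Fin k :=
  fun m => (hMove i j (List.ofFn u)).get
    (Fin.cast (by rw [hMove_length, List.length_ofFn]) m)

/-- The level-`n` Schreier graph `Γ_n` of `H(k)`: vertices are the `k^n` words of length
`n` over `{0, …, k-1}`, and `u`, `v` are adjacent iff `u ≠ v` and some generator
`a_{(ij)}` (with `i < j`) maps one to the other. -/
def levelGraph (k n : ℕ) : SimpleGraph (Fin n → Fin k) where
  Adj u v := u ≠ v ∧ ∃ i j : Fin k, i < j ∧ (levelMove i j u = v ∨ levelMove i j v = u)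
  symm := by
    constructor
    rintro u v ⟨huv, i, j, hij, h⟩
    exact ⟨huv.symm, i, j, hij, h.symm⟩
  loopless := ⟨fun u h => h.1 rfl⟩


/-! ### Auxiliary machinery -/

/-- The third peg. -/
def oth (x y : Fin 3) : Fin 3 :=
  if x ≠ 0 ∧ y ≠ 0 then 0 else if x ≠ 1 ∧ y ≠ 1 then 1 else 2

lemma oth_ne : ∀ x y : Fin 3, x ≠ y → oth x y ≠ x ∧ oth x y ≠ y := by decide

lemma eq_oth : ∀ x y z : Fin 3, x ≠ y → z ≠ x → z ≠ y → z = oth x y := by decide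

lemma oth_comm : ∀ x y : Fin 3, oth x y = oth y x := by decide

lemma cases_oth : ∀ t x y : Fin 3, x ≠ y → t = x ∨ t = y ∨ t = oth x y := by decide

/-- Distance-to-perfect-state potential, list given with the largest disk first. -/
def g : Fin 3 → List (Fin 3) → ℕ
  | _, [] => 0
  | t, x :: w => if x = t then g t w else 2 ^ w.length + g (oth x t) w

lemma gRepSelf : ∀ (s : ℕ) (t : Fin 3), g t (List.replicate s t) = 0 := by
  intro s
  induction s with
  | zero => intro t; rfl
  | succ s ih => intro t; simp [List.replicate_succ, g, ih]

lemma gRep : ∀ (s : ℕ) (x c : Fin 3), x ≠ c → g x (List.replicate s c) = 2 ^ s - 1 := by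
  intro s
  induction s with
  | zero => intro x c _; rfl
  | succ s ih =>
    intro x c h
    have hcx : c ≠ x := h.symm
    have h1 := (oth_ne c x hcx).1
    rw [List.replicate_succ]
    simp only [g, if_neg hcx, List.length_replicate]
    rw [ih (oth c x) c h1]
    have h2 : 1 ≤ 2 ^ s := Nat.one_le_two_pow
    rw [pow_succ]
    omega

/-- The potential changes by at most one when one letter flips between `x` and `y`
followed by a run of `c`'s. -/
lemma gM (x y c : Fin 3) (hxy : x ≠ y) (hxc : x ≠ c) (hyc : y ≠ c) (s : ℕ) :
    ∀ (q : List (Fin 3)) (t : Fin 3),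
      g t (q ++ x :: List.replicate s c) ≤ g t (q ++ y :: List.replicate s c) + 1 := by
  intro q
  induction q with
  | nil =>
    intro t
    simp only [List.nil_append]
    have hpow := Nat.one_le_two_pow (n := s)
    rcases cases_oth t x y hxy with rfl | rfl | rfl
    · -- x = t
      have e1 : g t (t :: List.replicate s c) = 2 ^ s - 1 := by
        simp [g, gRep s t c hxc]
      have e2 : g t (y :: List.replicate s c) = 2 ^ s := by
        have ho : oth y t = c := (eq_oth y t c hxy.symm (Ne.symm hyc) (Ne.symm hxc)).symm
        simp [g, Ne.symm hxy, ho, gRepSelf]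
      omega
    · -- y = t
      have e1 : g t (x :: List.replicate s c) = 2 ^ s := by
        have ho : oth x t = c := (eq_oth x t c hxy (Ne.symm hxc) (Ne.symm hyc)).symm
        simp [g, hxy, ho, gRepSelf]
      have e2 : g t (t :: List.replicate s c) = 2 ^ s - 1 := by
        simp [g, gRep s t c hyc]
      omega
    · -- t = oth x y
      have hcx : c = oth x y := eq_oth x y c hxy (Ne.symm hxc) (Ne.symm hyc)
      rw [← hcx]
      have h1 : oth x c = y := (eq_oth x c y hxc hxy.symm hyc).symm
      have h2 : oth y c = x := (eq_oth y c x hyc hxy hxc).symm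
      have e1 : g c (x :: List.replicate s c) = 2 ^ s + (2 ^ s - 1) := by
        simp [g, hxc, h1, gRep s y c hyc]
      have e2 : g c (y :: List.replicate s c) = 2 ^ s + (2 ^ s - 1) := by
        simp [g, hyc, h2, gRep s x c hxc]
      omega
  | cons z q ih =>
    intro t
    have hlen : (q ++ x :: List.replicate s c).length = (q ++ y :: List.replicate s c).length := by
      simp
    by_cases hzt : z = t
    · simp only [List.cons_append, g, if_pos hzt]
      exact ih t
    · simp only [List.cons_append, g, if_neg hzt, List.append_eq]
      rw [hlen]
      have := ih (oth z t)
      omega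

/-- Decomposition of the action of `hMove`. -/
lemma hMove_decomp (i j : Fin 3) (hij : i ≠ j) : ∀ l : List (Fin 3),
    hMove i j l = l ∨
      ∃ s p x y, ((x = i ∧ y = j) ∨ (x = j ∧ y = i)) ∧
        l = List.replicate s (oth i j) ++ x :: p ∧
        hMove i j l = List.replicate s (oth i j) ++ y :: p := by
  intro l
  induction l with
  | nil => exact Or.inl rfl
  | cons z l ih =>
    by_cases hzi : z = i
    · subst hzi
      exact Or.inr ⟨0, l, z, j, Or.inl ⟨rfl, rfl⟩, rfl, by simp [hMove]⟩
    · by_cases hzj : z = j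
      · subst hzj
        exact Or.inr ⟨0, l, z, i, Or.inr ⟨rfl, rfl⟩, rfl, by simp [hMove, Ne.symm hij, hzi]⟩
      · have hzc : z = oth i j := eq_oth i j z hij hzi hzj
        have hstep : hMove i j (z :: l) = z :: hMove i j l := by simp [hMove, hzi, hzj]
        rcases ih with h | ⟨s, p, x, y, hxy, hl, hm⟩
        · exact Or.inl (by rw [hstep, h])
        · refine Or.inr ⟨s + 1, p, x, y, hxy, ?_, ?_⟩
          · rw [List.replicate_succ, List.cons_append, ← hl, hzc]
          · rw [hstep, List.replicate_succ, List.cons_append, ← hm, hzc]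

/-- One move changes the potential by at most one. -/
lemma gMove (i j : Fin 3) (hij : i ≠ j) (l : List (Fin 3)) (t : Fin 3) :
    g t (hMove i j l).reverse ≤ g t l.reverse + 1 := by
  rcases hMove_decomp i j hij l with h | ⟨s, p, x, y, hxy, hl, hm⟩
  · rw [h]; omega
  · rw [hm, hl, List.reverse_append, List.reverse_cons, List.reverse_append,
      List.reverse_cons, List.reverse_replicate,
      List.append_assoc, List.append_assoc, List.singleton_append, List.singleton_append]
    have hothi := (oth_ne i j hij).1
    have hothj := (oth_ne i j hij).2
    rcases hxy with ⟨rfl, rfl⟩ | ⟨rfl, rfl⟩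
    · exact gM y x (oth x y) (Ne.symm hij) (Ne.symm hothj) (Ne.symm hothi) s p.reverse t
    · exact gM y x (oth y x) hij (Ne.symm hothi) (Ne.symm hothj) s p.reverse t

lemma ofFn_levelMove {n : ℕ} (i j : Fin 3) (u : Fin n → Fin 3) :
    List.ofFn (levelMove i j u) = hMove i j (List.ofFn u) := by
  apply List.ext_get
  · simp [hMove_length]
  · intro m h1 h2
    simp [levelMove, List.get_ofFn]

lemma ofFn_snoc {n : ℕ} (w : Fin n → Fin 3) (a : Fin 3) :
    List.ofFn (Fin.snoc w a) = List.ofFn w ++ [a] := by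
  rw [List.ofFn_succ']
  simp [List.concat_eq_append]

lemma hMove_append_left (i j : Fin 3) : ∀ l r : List (Fin 3),
    hMove i j (l ++ r) = hMove i j l ++ r ∨
      (hMove i j l = l ∧ hMove i j (l ++ r) = l ++ hMove i j r) := by
  intro l
  induction l with
  | nil => exact fun r => Or.inr ⟨rfl, rfl⟩
  | cons z l ih =>
    intro r
    by_cases hzi : z = i
    · exact Or.inl (by simp [hMove, hzi])
    · by_cases hzj : z = j
      · exact Or.inl (by by_cases hji : j = i <;> simp [hMove, hzi, hzj, hji])
      · rcases ih r with h | ⟨h1, h2⟩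
        · exact Or.inl (by simp [hMove, hzi, hzj, h])
        · exact Or.inr ⟨by simp [hMove, hzi, hzj, h1], by simp [hMove, hzi, hzj, h2]⟩

lemma hMove_append_skip (i j : Fin 3) : ∀ l r : List (Fin 3),
    (∀ z ∈ l, z ≠ i ∧ z ≠ j) → hMove i j (l ++ r) = l ++ hMove i j r := by
  intro l
  induction l with
  | nil => exact fun r _ => rfl
  | cons z l ih =>
    intro r h
    have hz := h z (by simp)
    simp only [List.cons_append]
    rw [show hMove i j (z :: (l ++ r)) = z :: hMove i j (l ++ r) by
      simp [hMove, hz.1, hz.2]]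
    rw [ih r fun z hz' => h z (by simp [hz'])]

lemma levelMove_snoc {n : ℕ} {w w' : Fin n → Fin 3} {i j : Fin 3} (a : Fin 3)
    (hmv : levelMove i j w = w') (hne : w ≠ w') :
    levelMove i j (Fin.snoc w a) = Fin.snoc w' a := by
  apply List.ofFn_injective
  rw [ofFn_levelMove, ofFn_snoc, ofFn_snoc]
  have hke : hMove i j (List.ofFn w) = List.ofFn w' := by rw [← ofFn_levelMove, hmv]
  rcases hMove_append_left i j (List.ofFn w) [a] with h | ⟨h1, _⟩
  · rw [h, hke]
  · exact absurd (List.ofFn_injective (by rw [← hke, h1])) (Ne.symm hne)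

lemma adj_snoc {n : ℕ} {w w' : Fin n → Fin 3} (a : Fin 3)
    (h : (levelGraph 3 n).Adj w w') :
    (levelGraph 3 (n + 1)).Adj (Fin.snoc w a) (Fin.snoc w' a) := by
  obtain ⟨hne, i, j, hij, hcase⟩ := h
  refine ⟨?_, i, j, hij, ?_⟩
  · intro hs
    have : w = w' := by
      have := congrArg Fin.init hs
      simpa [Fin.init_snoc] using this
    exact hne this
  · rcases hcase with h | h
    · exact Or.inl (levelMove_snoc a h hne)
    · exact Or.inr (levelMove_snoc a h hne.symm)

/-- Appending a fixed letter as a graph homomorphism. -/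
def homSnoc {n : ℕ} (a : Fin 3) : levelGraph 3 n →g levelGraph 3 (n + 1) where
  toFun w := Fin.snoc w a
  map_rel' h := adj_snoc a h

lemma edist_snoc {n : ℕ} (a : Fin 3) (w w' : Fin n → Fin 3) :
    (levelGraph 3 (n + 1)).edist (Fin.snoc w a) (Fin.snoc w' a) ≤
      (levelGraph 3 n).edist w w' := by
  rw [SimpleGraph.edist]
  refine le_iInf fun p => ?_
  calc (levelGraph 3 (n + 1)).edist (Fin.snoc w a) (Fin.snoc w' a)
      ≤ (p.map (homSnoc a)).length := SimpleGraph.edist_le _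
    _ = p.length := by rw [SimpleGraph.Walk.length_map]

/-- The potential of a word: distance to the perfect state on peg `2`. -/
def fPot {n : ℕ} (u : Fin n → Fin 3) : ℕ := g 2 (List.ofFn u).reverse

lemma fPot_adj {n : ℕ} {u v : Fin n → Fin 3} (h : (levelGraph 3 n).Adj u v) :
    fPot u ≤ fPot v + 1 := by
  obtain ⟨hne, i, j, hij, hc⟩ := h
  have hij' : i ≠ j := hij.ne
  rcases hc with h | h
  · have : hMove i j (List.ofFn v) = List.ofFn u := by
      rw [← h, ofFn_levelMove, hMove_involutive]
    calc fPot u = g 2 (hMove i j (List.ofFn v)).reverse := by rw [this]; rfl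
      _ ≤ fPot v + 1 := gMove i j hij' _ _
  · have : hMove i j (List.ofFn v) = List.ofFn u := by rw [← h, ofFn_levelMove]
    calc fPot u = g 2 (hMove i j (List.ofFn v)).reverse := by rw [this]; rfl
      _ ≤ fPot v + 1 := gMove i j hij' _ _

lemma fPot_walk {n : ℕ} {u v : Fin n → Fin 3} (p : (levelGraph 3 n).Walk u v) :
    fPot u ≤ fPot v + p.length := by
  induction p with
  | nil => simp
  | @cons a b c h p ih =>
    have h1 := fPot_adj h
    rw [SimpleGraph.Walk.length_cons]
    omega

lemma lower_bound (n : ℕ) :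
    ((2 ^ n - 1 : ℕ) : ℕ∞) ≤ (levelGraph 3 n).edist (fun _ => 0) (fun _ => 2) := by
  rw [SimpleGraph.edist]
  refine le_iInf fun p => ?_
  have hw := fPot_walk p
  have f0 : fPot (fun _ : Fin n => (0 : Fin 3)) = 2 ^ n - 1 := by
    rw [fPot, List.ofFn_const, List.reverse_replicate]
    exact gRep n 2 0 (by decide)
  have f2 : fPot (fun _ : Fin n => (2 : Fin 3)) = 0 := by
    rw [fPot, List.ofFn_const, List.reverse_replicate]
    exact gRepSelf n 2
  have : 2 ^ n - 1 ≤ p.length := by omega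
  exact_mod_cast Nat.cast_le.mpr this

lemma adj_perfect_lt {n : ℕ} {i j : Fin 3} (hij : i < j) :
    (levelGraph 3 (n + 1)).Adj (Fin.snoc (fun _ => oth i j) i) (Fin.snoc (fun _ => oth i j) j) := by
  have hij' : i ≠ j := hij.ne
  have hothi := (oth_ne i j hij').1
  have hothj := (oth_ne i j hij').2
  refine ⟨?_, i, j, hij, Or.inl ?_⟩
  · intro hs
    have := congrArg (fun u => u (Fin.last n)) hs
    simp only [Fin.snoc_last] at this
    exact hij' this
  · apply List.ofFn_injective
    rw [ofFn_levelMove, ofFn_snoc, ofFn_snoc, List.ofFn_const]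
    rw [hMove_append_skip i j _ _ fun z hz => by
      rw [List.eq_of_mem_replicate hz]; exact ⟨hothi, hothj⟩]
    congr 1
    simp [hMove, hij']

lemma adj_perfect {n : ℕ} {a b : Fin 3} (hab : a ≠ b) :
    (levelGraph 3 (n + 1)).Adj (Fin.snoc (fun _ => oth a b) a) (Fin.snoc (fun _ => oth a b) b) := by
  rcases lt_or_gt_of_ne hab with h | h
  · exact adj_perfect_lt h
  · have := (adj_perfect_lt (n := n) h).symm
    rwa [oth_comm] at this

lemma upper_bound : ∀ (n : ℕ) (u v : Fin n → Fin 3),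
    (levelGraph 3 n).edist u v ≤ ((2 ^ n - 1 : ℕ) : ℕ∞)
  | 0, u, v => by
    have : u = v := funext fun m => m.elim0
    simp [this]
  | (n + 1), u, v => by
    set a := u (Fin.last n) with ha
    set b := v (Fin.last n) with hb
    have hu : u = Fin.snoc (Fin.init u) a := (Fin.snoc_init_self u).symm
    have hv : v = Fin.snoc (Fin.init v) b := (Fin.snoc_init_self v).symm
    have hmono : ((2 ^ n - 1 : ℕ) : ℕ∞) ≤ ((2 ^ (n + 1) - 1 : ℕ) : ℕ∞) := by
      have h2 : (2 : ℕ) ^ n ≤ 2 ^ (n + 1) := Nat.pow_le_pow_right (by norm_num) (Nat.le_succ n)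
      exact Nat.cast_le.mpr (by omega)
    by_cases hab : a = b
    · rw [hu, hv, ← hab]
      calc (levelGraph 3 (n + 1)).edist _ _
          ≤ (levelGraph 3 n).edist (Fin.init u) (Fin.init v) := edist_snoc a _ _
        _ ≤ ((2 ^ n - 1 : ℕ) : ℕ∞) := upper_bound n _ _
        _ ≤ _ := hmono
    · set c := oth a b with hc
      have hmid : (levelGraph 3 (n + 1)).Adj (Fin.snoc (fun _ => c) a)
          (Fin.snoc (fun _ => c) b) := adj_perfect hab
      have h1 : (levelGraph 3 (n + 1)).edist u (Fin.snoc (fun _ => c) a) ≤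
          ((2 ^ n - 1 : ℕ) : ℕ∞) := by
        rw [hu]
        exact (edist_snoc a _ _).trans (upper_bound n _ _)
      have h2 : (levelGraph 3 (n + 1)).edist (Fin.snoc (fun _ => c) b) v ≤
          ((2 ^ n - 1 : ℕ) : ℕ∞) := by
        rw [hv]
        exact (edist_snoc b _ _).trans (upper_bound n _ _)
      have hmide : (levelGraph 3 (n + 1)).edist (Fin.snoc (fun _ => c) a)
          (Fin.snoc (fun _ => c) b) ≤ 1 :=
        le_of_eq (SimpleGraph.edist_eq_one_iff_adj.mpr hmid)
      calc (levelGraph 3 (n + 1)).edist u v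
          ≤ (levelGraph 3 (n + 1)).edist u (Fin.snoc (fun _ => c) a) +
            (levelGraph 3 (n + 1)).edist (Fin.snoc (fun _ => c) a) v :=
            SimpleGraph.edist_triangle
        _ ≤ (levelGraph 3 (n + 1)).edist u (Fin.snoc (fun _ => c) a) +
            ((levelGraph 3 (n + 1)).edist (Fin.snoc (fun _ => c) a)
              (Fin.snoc (fun _ => c) b) +
             (levelGraph 3 (n + 1)).edist (Fin.snoc (fun _ => c) b) v) := by
            gcongr
            exact SimpleGraph.edist_triangle
        _ ≤ ((2 ^ n - 1 : ℕ) : ℕ∞) + (1 + ((2 ^ n - 1 : ℕ) : ℕ∞)) := by gcongr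
        _ = ((2 ^ (n + 1) - 1 : ℕ) : ℕ∞) := by
            have hp : 1 ≤ 2 ^ n := Nat.one_le_two_pow
            have : (2 ^ n - 1) + (1 + (2 ^ n - 1)) = 2 ^ (n + 1) - 1 := by
              rw [pow_succ]; omega
            rw [← this]
            push_cast
            ring

/-- For `k = 3`, the diameter of the level-`n` Schreier graph `Γ_n` of
the Hanoi Towers group `H(3)` equals `2^n - 1` for every `n`. -/
theorem hanoi3_diameter (n : ℕ) : (levelGraph 3 n).diam = 2 ^ n - 1 := by
  have he : (levelGraph 3 n).ediam = ((2 ^ n - 1 : ℕ) : ℕ∞) := by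
    refine le_antisymm (SimpleGraph.ediam_le_of_edist_le fun u v => upper_bound n u v) ?_
    exact (lower_bound n).trans SimpleGraph.edist_le_ediam
  rw [SimpleGraph.diam, he, ENat.toNat_coe]
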